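/- If an infinite word u over a finite alphabet A is C-balanced (i.e., for any two factors v, w of u of the same length and any letter i, ||v|_i - |w|_i| ≤ C), then every letter i has a uniform frequency f_i in u, and for every factor w of u and every letter i one has ||w|_i - f_i·|w|| ≤ C. -/

import Mathlib

open Filter Topology

/-- The factor of the infinite word `u` of length `n` starting at position `k`. -/
def factorAt {A : Type*} (u : ℕ → A) (k n : ℕ) : List A :=
  (List.range n).map (fun j => u (k + j))

/-- `w` is a factor of the infinite word `u`. -/
def IsFactor {A : Type*} (u : ℕ → A) (w : List A) : Prop :=
  ∃ k, w = factorAt u k w.length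

lemma factorAt_length {A : Type*} (u : ℕ → A) (k n : ℕ) : (factorAt u k n).length = n := by
  simp [factorAt]

lemma factorAt_add {A : Type*} (u : ℕ → A) (k m n : ℕ) :
    factorAt u k (m + n) = factorAt u k m ++ factorAt u (k + m) n := by
  simp only [factorAt, List.range_add, List.map_append, List.map_map]
  congr 1
  apply List.map_congr_left
  intro x _
  simp only [Function.comp]
  ring_nf

lemma isFactor_factorAt {A : Type*} (u : ℕ → A) (k n : ℕ) : IsFactor u (factorAt u k n) :=
  ⟨k, by rw [factorAt_length]⟩

/-- If an infinite word `u` over a finite alphabet is `C`-balanced, then every letter `i`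
has a (uniform) frequency `f i` in `u`, and for every factor `w` of `u` one has
`||w|_i - f i * |w|| ≤ C`. -/
theorem balanced_implies_frequencies {A : Type*} [Fintype A] [DecidableEq A]
    (u : ℕ → A) (C : ℝ)
    (hbal : ∀ v w : List A, IsFactor u v → IsFactor u w → v.length = w.length →
      ∀ i : A, |(v.count i : ℝ) - (w.count i : ℝ)| ≤ C) :
    ∀ i : A, ∃ f : ℝ,
      Tendsto (fun n => ((factorAt u 0 n).count i : ℝ) / n) atTop (𝓝 f) ∧
      ∀ w : List A, IsFactor u w → |(w.count i : ℝ) - f * w.length| ≤ C := by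
  intro i
  have hC0 : 0 ≤ C := by
    have := hbal [] [] ⟨0, rfl⟩ ⟨0, rfl⟩ rfl i
    simpa using this
  set S : ℕ → Set ℕ := fun n => Set.range fun k => (factorAt u k n).count i with hS
  have hne : ∀ n, (S n).Nonempty := fun n => ⟨(factorAt u 0 n).count i, 0, rfl⟩
  have hbd : ∀ n, BddAbove (S n) := by
    intro n
    refine ⟨n, ?_⟩
    rintro x ⟨k, rfl⟩
    exact List.count_le_length.trans_eq (factorAt_length u k n)
  set φ : ℕ → ℕ := fun n => sSup (S n) with hφ
  set ψ : ℕ → ℕ := fun n => sInf (S n) with hψ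
  have hφmem : ∀ n, φ n ∈ S n := fun n => Nat.sSup_mem (hne n) (hbd n)
  have hψmem : ∀ n, ψ n ∈ S n := fun n => Nat.sInf_mem (hne n)
  have hcle : ∀ k n, (factorAt u k n).count i ≤ φ n := fun k n => le_csSup (hbd n) ⟨k, rfl⟩
  have hlec : ∀ k n, ψ n ≤ (factorAt u k n).count i := fun k n => Nat.sInf_le ⟨k, rfl⟩
  have hψφ : ∀ n, ψ n ≤ φ n := fun n => (hlec 0 n).trans (hcle 0 n)
  -- gap bound
  have hgap : ∀ n, (φ n : ℝ) - ψ n ≤ C := by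
    intro n
    obtain ⟨k1, hk1⟩ := hφmem n
    obtain ⟨k2, hk2⟩ := hψmem n
    have hb := hbal (factorAt u k1 n) (factorAt u k2 n) (isFactor_factorAt u k1 n)
      (isFactor_factorAt u k2 n) (by rw [factorAt_length, factorAt_length]) i
    simp only at hk1 hk2
    rw [hk1, hk2] at hb
    exact (le_abs_self _).trans hb
  -- subadditivity of φ
  have hφsub : ∀ m n, φ (m + n) ≤ φ m + φ n := by
    intro m n
    obtain ⟨k, hk⟩ := hφmem (m + n)
    simp only at hk
    rw [← hk, factorAt_add, List.count_append]
    exact Nat.add_le_add (hcle k m) (hcle (k + m) n)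
  -- superadditivity of ψ
  have hψsup : ∀ m n, ψ m + ψ n ≤ ψ (m + n) := by
    intro m n
    obtain ⟨k, hk⟩ := hψmem (m + n)
    simp only at hk
    rw [← hk, factorAt_add, List.count_append]
    exact Nat.add_le_add (hlec k m) (hlec (k + m) n)
  have hψmul : ∀ (k n : ℕ), k * ψ n ≤ ψ (k * n) := by
    intro k n
    induction k with
    | zero => simp
    | succ k ih =>
      have : ψ (k * n) + ψ n ≤ ψ (k * n + n) := hψsup (k * n) n
      calc (k + 1) * ψ n = k * ψ n + ψ n := by ring
        _ ≤ ψ (k * n) + ψ n := by omega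
        _ ≤ ψ (k * n + n) := this
        _ = ψ ((k + 1) * n) := by ring_nf
  -- Fekete
  set F : ℕ → ℝ := fun n => (φ n : ℝ) with hF
  have hsub : Subadditive F := by
    intro m n
    simp only [hF]
    exact_mod_cast hφsub m n
  have hbdd : BddBelow (Set.range fun n => F n / n) := by
    refine ⟨0, ?_⟩
    rintro x ⟨n, rfl⟩
    positivity
  set f : ℝ := hsub.lim with hflim
  have htendF : Tendsto (fun n => F n / n) atTop (𝓝 f) := hsub.tendsto_lim hbdd
  have h_f_le : ∀ n : ℕ, n ≠ 0 → f ≤ (φ n : ℝ) / n := fun n hn => hsub.lim_le_div hbdd hn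
  have h_le_f : ∀ n : ℕ, n ≠ 0 → (ψ n : ℝ) / n ≤ f := by
    intro n hn
    have hnpos : (0 : ℝ) < n := by exact_mod_cast Nat.pos_of_ne_zero hn
    have hmul : Tendsto (fun k : ℕ => k * n) atTop atTop :=
      tendsto_atTop_atTop.2 fun b =>
        ⟨b, fun a ha => le_trans ha (Nat.le_mul_of_pos_right a (Nat.pos_of_ne_zero hn))⟩
    refine ge_of_tendsto (htendF.comp hmul) ?_
    filter_upwards [eventually_ge_atTop 1] with k hk
    have hkpos : (0 : ℝ) < k := by exact_mod_cast hk
    have h1 : (k : ℝ) * ψ n ≤ F (k * n) := by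
      have := (hψmul k n).trans (hψφ (k * n))
      simp only [hF]
      exact_mod_cast this
    calc (ψ n : ℝ) / n = ((k : ℝ) * ψ n) / ((k : ℝ) * n) := by
          rw [mul_div_mul_left _ _ hkpos.ne']
      _ ≤ F (k * n) / ((k : ℝ) * n) := by gcongr
      _ = ((fun m => F m / m) ∘ fun k => k * n) k := by
          simp [Function.comp, Nat.cast_mul]
  -- key bound
  have hkey : ∀ (n k : ℕ), |((factorAt u k n).count i : ℝ) - f * n| ≤ C := by
    intro n k
    rcases Nat.eq_zero_or_pos n with hn | hn
    · subst hn; simp [factorAt, hC0]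
    · have hnpos : (0 : ℝ) < n := by exact_mod_cast hn
      have h1 : (ψ n : ℝ) ≤ f * n := by
        have := h_le_f n hn.ne'
        rw [div_le_iff₀ hnpos] at this
        linarith
      have h2 : f * n ≤ (φ n : ℝ) := by
        have := h_f_le n hn.ne'
        rw [le_div_iff₀ hnpos] at this
        linarith
      have h3 : (ψ n : ℝ) ≤ ((factorAt u k n).count i : ℝ) := by exact_mod_cast hlec k n
      have h4 : ((factorAt u k n).count i : ℝ) ≤ (φ n : ℝ) := by exact_mod_cast hcle k n
      have hg := hgap n
      rw [abs_le]
      constructor <;> linarith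
  refine ⟨f, ?_, ?_⟩
  · rw [← tendsto_sub_nhds_zero_iff]
    refine squeeze_zero_norm' ?_ (tendsto_const_div_atTop_nhds_zero_nat C)
    filter_upwards [eventually_ge_atTop 1] with n hn
    have hnpos : (0 : ℝ) < n := by exact_mod_cast hn
    have : ((factorAt u 0 n).count i : ℝ) / n - f = (((factorAt u 0 n).count i : ℝ) - f * n) / n := by
      field_simp
    rw [Real.norm_eq_abs, this, abs_div, abs_of_pos hnpos]
    gcongr
    exact hkey n 0
  · rintro w ⟨k, hk⟩
    rw [hk, factorAt_length]
    exact hkey w.length k
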